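/- Let $k\ge 1$ be an integer, $C>0$, and let $M_0, M_1,\dots$ be nonnegative functions on $[0,\infty)$, each nonincreasing, satisfying for all $0\le s_1\le s_2$ and each $0\le j\le k-1$: $M_j(s_2) + \tfrac12\int_{s_1}^{s_2} M_{j+1}(s)\,ds \le C\, M_j(s_1)$. Then for all $s> 0$, $M_k(s) \le \frac{k!\,(2C)^k}{s^k}\, M_0(0)$. -/

import Mathlib

open MeasureTheory Set

/-- Abstract iteration lemma: iterated monotone energy inequalities with
integrated decay imply polynomial-in-time decay. -/
theorem iteration_decay
    (k : ℕ) (hk : 1 ≤ k) (C : ℝ) (hC : 0 < C)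
    (M : ℕ → ℝ → ℝ)
    (hnonneg : ∀ j, ∀ s ≥ (0 : ℝ), 0 ≤ M j s)
    (hmono : ∀ j, AntitoneOn (M j) (Ici (0 : ℝ)))
    (hineq : ∀ j < k, ∀ s₁ s₂ : ℝ, 0 ≤ s₁ → s₁ ≤ s₂ →
      M j s₂ + (1 / 2) * (∫ s in s₁..s₂, M (j + 1) s) ≤ C * M j s₁) :
    ∀ s : ℝ, 0 < s →
      M k s ≤ (Nat.factorial k : ℝ) * (2 * C) ^ k / s ^ k * M 0 0 := by
  intro s hs
  have key : ∀ j, j ≤ k → ∀ t, 0 ≤ t → t ≤ s →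
      (s - t) ^ j / (Nat.factorial j : ℝ) * M k s ≤ (2 * C) ^ j * M (k - j) t := by
    intro j
    induction j with
    | zero =>
      intro _ t ht hts
      simp only [pow_zero, Nat.factorial_zero, Nat.cast_one, div_one, one_mul, Nat.sub_zero]
      exact hmono k (mem_Ici.mpr ht) (mem_Ici.mpr (ht.trans hts)) hts
    | succ j ih =>
      intro hjk t ht hts
      have hj : j ≤ k := Nat.le_of_succ_le hjk
      have hs0 : (0:ℝ) ≤ s := ht.trans hts
      have hsub : uIcc t s ⊆ Ici (0:ℝ) := by
        rw [uIcc_of_le hts]; exact fun x hx => ht.trans hx.1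
      have hint2 : IntervalIntegrable (M (k - j)) volume t s :=
        ((hmono (k - j)).mono hsub).intervalIntegrable
      have hint1 : IntervalIntegrable
          (fun u => (s - u) ^ j / (Nat.factorial j : ℝ) * M k s) volume t s := by
        apply Continuous.intervalIntegrable
        continuity
      have hmonoint : (∫ u in t..s, (s - u) ^ j / (Nat.factorial j : ℝ) * M k s)
          ≤ ∫ u in t..s, (2 * C) ^ j * M (k - j) u := by
        apply intervalIntegral.integral_mono_on hts hint1 (hint2.const_mul _)
        intro u hu
        exact ih hj u (ht.trans hu.1) hu.2
      have hval : (∫ u in t..s, (s - u) ^ j / (Nat.factorial j : ℝ) * M k s)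
          = (s - t) ^ (j+1) / (Nat.factorial (j+1) : ℝ) * M k s := by
        have h1 : (fun u => (s - u) ^ j / (Nat.factorial j : ℝ) * M k s)
            = fun u => (fun v => v ^ j) (s - u) * (M k s / (Nat.factorial j : ℝ)) := by
          funext u; ring
        rw [h1, intervalIntegral.integral_mul_const,
          intervalIntegral.integral_comp_sub_left (fun v => v ^ j) s]
        rw [integral_pow]
        rw [Nat.factorial_succ]
        have hne : ((j:ℝ)+1) ≠ 0 := by positivity
        have hfne : ((Nat.factorial j : ℝ)) ≠ 0 := by positivity
        push_cast
        field_simp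
        simp
      have hlt : k - (j+1) < k := by omega
      have hidx : k - (j+1) + 1 = k - j := by omega
      have hineq' := hineq (k - (j+1)) hlt t s ht hts
      rw [hidx] at hineq'
      have hintle : (∫ u in t..s, M (k - j) u) ≤ 2 * C * M (k - (j+1)) t := by
        have := hnonneg (k - (j+1)) s hs0
        linarith
      have hpow : (0:ℝ) ≤ (2*C)^j := by positivity
      calc (s - t) ^ (j+1) / (Nat.factorial (j+1) : ℝ) * M k s
          = ∫ u in t..s, (s - u) ^ j / (Nat.factorial j : ℝ) * M k s := hval.symm
        _ ≤ ∫ u in t..s, (2 * C) ^ j * M (k - j) u := hmonoint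
        _ = (2 * C) ^ j * ∫ u in t..s, M (k - j) u :=
            intervalIntegral.integral_const_mul _ _
        _ ≤ (2 * C) ^ j * (2 * C * M (k - (j+1)) t) :=
            mul_le_mul_of_nonneg_left hintle hpow
        _ = (2 * C) ^ (j+1) * M (k - (j+1)) t := by rw [pow_succ]; ring
  have hkey := key k le_rfl 0 le_rfl hs.le
  simp only [Nat.sub_self, sub_zero] at hkey
  have hfac : (0:ℝ) < (Nat.factorial k : ℝ) := by positivity
  have hspow : (0:ℝ) < s ^ k := pow_pos hs k
  rw [div_mul_eq_mul_div, div_le_iff₀ hfac] at hkey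
  rw [div_mul_eq_mul_div, le_div_iff₀ hspow]
  nlinarith [hkey]
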